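/- Consider the non-autonomous compartmental NFDE with associated map F and assume (C1), (C3), (C4), (C5). Then for all t ∈ ℝ, all x, y ∈ BU with x ≤_D y, and all i ∈ {1,…,m}: F_i(t,y) − F_i(t,x) ≥ −Σ_{j=0}^m d_{ji} · [D_i y − D_i x] + Σ_{j=1}^m ∫_{−∞}^0 (y_j(s) − x_j(s)) dη_ij(s), where dη_ij = c_ij dμ_ij − Σ_{k=0}^m d_ki dν_ij. -/

import Mathlib

open MeasureTheory Filter Set

/-- `x` is bounded and uniformly continuous on `(-∞,0]` (membership in `BU`,
where only the restriction of `x` to `(-∞,0]` is relevant). -/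
def IsBU (m : ℕ) (x : ℝ → Fin m → ℝ) : Prop :=
  (∃ C : ℝ, ∀ s : ℝ, s ≤ 0 → ‖x s‖ ≤ C) ∧
  ∀ ε > (0:ℝ), ∃ δ > (0:ℝ), ∀ s : ℝ, s ≤ 0 → ∀ s' : ℝ, s' ≤ 0 →
    |s - s'| < δ → ‖x s - x s'‖ < ε

/-- the supremum norm `‖x‖_∞ = sup_{s ≤ 0} ‖x(s)‖`. -/
noncomputable def supNorm (m : ℕ) (x : ℝ → Fin m → ℝ) : ℝ :=
  ⨆ s : Set.Iic (0:ℝ), ‖x (s : ℝ)‖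

/-- time shift: `shift m x t = x_t`, where `x_t(s) = x(t+s)`. -/
def shift (m : ℕ) (x : ℝ → Fin m → ℝ) (t : ℝ) : ℝ → Fin m → ℝ :=
  fun s => x (t + s)

/-- The operator `Dx = x(0) - ∫_{-∞}^0 [dν(s)] x(s)`, where the matrix of real
(signed) Borel measures `ν` is given through a positive part `νp` and a
negative part `νn` (Jordan decomposition), i.e. `ν i j = νp i j - νn i j`. -/
noncomputable def Dop (m : ℕ) (νp νn : Fin m → Fin m → Measure ℝ)
    (x : ℝ → Fin m → ℝ) : Fin m → ℝ :=
  fun i => x 0 i - ∑ j : Fin m,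
    ((∫ s in Set.Iic (0:ℝ), x s j ∂(νp i j)) - ∫ s in Set.Iic (0:ℝ), x s j ∂(νn i j))

/-- the measures `ν_ij` have finite total variation and `|ν_ij|({0}) = 0`. -/
def NuCond (m : ℕ) (νp νn : Fin m → Fin m → Measure ℝ) : Prop :=
  (∀ i j, νp i j Set.univ ≠ ⊤) ∧ (∀ i j, νn i j Set.univ ≠ ⊤) ∧
  (∀ i j, νp i j {0} = 0) ∧ (∀ i j, νn i j {0} = 0)

/-- `D` is stable: there is a continuous `c : [0,∞) → [0,∞)` with `c(t) → 0`
as `t → ∞` such that every continuous `x : ℝ → ℝ^m` with `x_0 ∈ BU` and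
`D x_t = 0` for all `t ≥ 0` satisfies `‖x(t)‖ ≤ c(t) ‖x_0‖_∞` for all `t ≥ 0`. -/
def IsStableOp (m : ℕ) (D : (ℝ → Fin m → ℝ) → Fin m → ℝ) : Prop :=
  ∃ c : ℝ → ℝ, ContinuousOn c (Set.Ici 0) ∧ (∀ t : ℝ, 0 ≤ t → 0 ≤ c t) ∧
    Filter.Tendsto c Filter.atTop (nhds 0) ∧
    ∀ x : ℝ → Fin m → ℝ, Continuous x → IsBU m x →
      (∀ t : ℝ, 0 ≤ t → D (shift m x t) = 0) →
      ∀ t : ℝ, 0 ≤ t → ‖x t‖ ≤ c t * supNorm m x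

/-- the convolution operator `D̂`, `(D̂x)(s) = D x_s`. -/
noncomputable def Dhat (m : ℕ) (νp νn : Fin m → Fin m → Measure ℝ)
    (x : ℝ → Fin m → ℝ) : ℝ → Fin m → ℝ :=
  fun s => Dop m νp νn (shift m x s)

/-- the seminorm `‖x‖_n = sup_{s ∈ [-n,0]} ‖x(s)‖`. -/
noncomputable def normOn (m : ℕ) (n : ℕ) (x : ℝ → Fin m → ℝ) : ℝ :=
  ⨆ s : Set.Icc (-(n:ℝ)) 0, ‖x (s : ℝ)‖

/-- the compact-open metric
`d(x,y) = ∑_{n ≥ 1} 2⁻ⁿ ‖x-y‖_n / (1 + ‖x-y‖_n)`. -/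
noncomputable def coDist (m : ℕ) (x y : ℝ → Fin m → ℝ) : ℝ :=
  ∑' n : ℕ, (1/2 : ℝ)^(n+1) *
    (normOn m (n+1) (fun s => x s - y s)) / (1 + normOn m (n+1) (fun s => x s - y s))

/-- `sup_{0 ≤ u ≤ t} ‖h(u)‖`. -/
noncomputable def supOn (m : ℕ) (h : ℝ → Fin m → ℝ) (t : ℝ) : ℝ :=
  ⨆ u : Set.Icc (0:ℝ) t, ‖h (u : ℝ)‖

/-- the order `x ≤_D y`, i.e. `D x_s ≤ D y_s` (componentwise) for all `s ≤ 0`. -/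
def leD (m : ℕ) (νp νn : Fin m → Fin m → Measure ℝ) (x y : ℝ → Fin m → ℝ) : Prop :=
  ∀ s : ℝ, s ≤ 0 → ∀ i, Dhat m νp νn x s i ≤ Dhat m νp νn y s i

/-! ### Compartmental systems

Indices: compartments are `j : Fin m`; in the first index of the transport
functions `g`, `0 : Fin (m+1)` denotes the environment `C_0` and `j.succ`
denotes the compartment `C_j`.  `g i j t v` is the transport function `g̃_ij(t,v)`
and `It i t` is the inflow `Ĩ_i(t) = g̃_{i0}(t)`. -/

/-- The right-hand side of the compartmental system:
`F_i(t,x) = -g̃_{0i}(t,x_i(0)) - ∑_j g̃_{ji}(t,x_i(0))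
  + ∑_j ∫_{-∞}^0 g̃_{ij}(t+s, x_j(s)) dμ_ij(s) + Ĩ_i(t)`. -/
noncomputable def Fcomp (m : ℕ) (μ : Fin m → Fin m → Measure ℝ)
    (g : Fin (m+1) → Fin m → ℝ → ℝ → ℝ) (It : Fin m → ℝ → ℝ)
    (t : ℝ) (x : ℝ → Fin m → ℝ) : Fin m → ℝ :=
  fun i => - g 0 i t (x 0 i) - (∑ j : Fin m, g j.succ i t (x 0 i))
    + (∑ j : Fin m, ∫ s in Set.Iic (0:ℝ), g i.succ j (t + s) (x s j) ∂(μ i j))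
    + It i t

/-- The total mass
`M(t,x) = ∑_i D_i x + ∑_i ∑_j ∫_{-∞}^0 (∫_s^0 g̃_{ji}(t+τ, x_i(τ)) dτ) dμ_ji(s)`. -/
noncomputable def Mass (m : ℕ) (μ ν : Fin m → Fin m → Measure ℝ)
    (g : Fin (m+1) → Fin m → ℝ → ℝ → ℝ) (t : ℝ) (x : ℝ → Fin m → ℝ) : ℝ :=
  (∑ i : Fin m, Dop m ν (fun _ _ => 0) x i) +
    ∑ i : Fin m, ∑ j : Fin m,
      ∫ s in Set.Iic (0:ℝ), (∫ τ in s..(0:ℝ), g j.succ i (t + τ) (x τ i)) ∂(μ j i)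

/-- (C1): the transport functions are `C¹`-admissible: `C¹` in the second
variable; `g̃` and `∂g̃/∂v` uniformly continuous and bounded on `ℝ × {v₀}` for
all `v₀`; all components monotone in the second variable; `g̃_ij(t,0) = 0`;
and the inflows `Ĩ_i ≥ 0` are bounded and uniformly continuous. -/
def C1cond (m : ℕ) (g : Fin (m+1) → Fin m → ℝ → ℝ → ℝ) (It : Fin m → ℝ → ℝ) : Prop :=
  (∀ i j t, ContDiff ℝ 1 (fun v => g i j t v)) ∧
  (∀ i j (v : ℝ), ∃ C : ℝ, ∀ t : ℝ, |g i j t v| ≤ C) ∧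
  (∀ i j (v : ℝ), ∀ ε > (0:ℝ), ∃ δ > (0:ℝ), ∀ t t' : ℝ, |t - t'| < δ →
    |g i j t v - g i j t' v| < ε) ∧
  (∀ i j (v : ℝ), ∃ C : ℝ, ∀ t : ℝ, |deriv (g i j t) v| ≤ C) ∧
  (∀ i j (v : ℝ), ∀ ε > (0:ℝ), ∃ δ > (0:ℝ), ∀ t t' : ℝ, |t - t'| < δ →
    |deriv (g i j t) v - deriv (g i j t') v| < ε) ∧
  (∀ i j t, Monotone (g i j t)) ∧
  (∀ i j t, g i j t 0 = 0) ∧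
  (∀ i (t : ℝ), 0 ≤ It i t) ∧
  (∀ i, ∃ C : ℝ, ∀ t : ℝ, |It i t| ≤ C) ∧
  (∀ i, ∀ ε > (0:ℝ), ∃ δ > (0:ℝ), ∀ t t' : ℝ, |t - t'| < δ → |It i t - It i t'| < ε)

/-- (C3): the `μ_ij` are positive Borel measures on `(-∞,0]` with
`μ_ij((-∞,0]) = 1` and `∫_{-∞}^0 |s| dμ_ij(s) < ∞`. -/
def C3cond (m : ℕ) (μ : Fin m → Fin m → Measure ℝ) : Prop :=
  (∀ i j, μ i j (Set.Iic 0) = 1) ∧ (∀ i j, μ i j (Set.Ioi 0) = 0) ∧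
  (∀ i j, MeasureTheory.IntegrableOn (fun s : ℝ => |s|) (Set.Iic 0) (μ i j))

/-- (C4): the `ν_ij` are positive Borel measures on `(-∞,0]` with finite total
variation, `ν_ij({0}) = 0` and `∑_j ν_ij((-∞,0]) < 1` for each `i` (so that
the associated `D`-operator is stable). -/
def C4cond (m : ℕ) (ν : Fin m → Fin m → Measure ℝ) : Prop :=
  (∀ i j, ν i j Set.univ ≠ ⊤) ∧ (∀ i j, ν i j (Set.Ioi 0) = 0) ∧
  (∀ i j, ν i j {0} = 0) ∧ (∀ i, ∑ j : Fin m, (ν i j (Set.Iic 0)).toReal < 1)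

/-- `cc i j = c_ij = inf_{(t,v)} ∂g̃_ij/∂v(t,v)` and
`dd i j = d_ij = sup_{(t,v)} ∂g̃_ij/∂v(t,v)`. -/
def CDcond (m : ℕ) (g : Fin (m+1) → Fin m → ℝ → ℝ → ℝ)
    (cc dd : Fin (m+1) → Fin m → ℝ) : Prop :=
  (∀ i j, IsGLB {y : ℝ | ∃ t v : ℝ, y = deriv (g i j t) v} (cc i j)) ∧
  (∀ i j, IsLUB {y : ℝ | ∃ t v : ℝ, y = deriv (g i j t) v} (dd i j))

/-- (C5): the measures `dη_ij = c_ij dμ_ij - (∑_{k=0}^m d_ki) dν_ij` are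
positive. -/
def C5cond (m : ℕ) (μ ν : Fin m → Fin m → Measure ℝ)
    (cc dd : Fin (m+1) → Fin m → ℝ) : Prop :=
  ∀ (i j : Fin m) (A : Set ℝ), MeasurableSet A →
    (∑ k : Fin (m+1), dd k i) * (ν i j A).toReal ≤ cc i.succ j * (μ i j A).toReal

/-- `zz` is a solution of the compartmental system `(d/dt) D z_t = F(t, z_t)`
on `(-∞,T)`, with `z_0 ∈ BU`. -/
def IsSolOn (m : ℕ) (μ ν : Fin m → Fin m → Measure ℝ)
    (g : Fin (m+1) → Fin m → ℝ → ℝ → ℝ) (It : Fin m → ℝ → ℝ)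
    (T : ℝ) (zz : ℝ → Fin m → ℝ) : Prop :=
  IsBU m zz ∧ ContinuousOn zz (Set.Iio T) ∧
  ∀ t ∈ Set.Ico (0:ℝ) T,
    HasDerivWithinAt (fun τ => Dop m ν (fun _ _ => 0) (shift m zz τ))
      (Fcomp m μ g It t (shift m zz t)) (Set.Ico 0 T) t

/-- (Lemma 4.1.) Under (C1), (C3), (C4), (C5), for all `t`,
all `x ≤_D y` in `BU` and all `i`:
`F_i(t,y) - F_i(t,x) ≥ -∑_{j=0}^m d_ji [D_i y - D_i x]
  + ∑_{j=1}^m ∫_{-∞}^0 (y_j(s) - x_j(s)) dη_ij(s)`,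
where `∫ (…) dη_ij = c_ij ∫ (…) dμ_ij - (∑_{k=0}^m d_ki) ∫ (…) dν_ij`. -/

lemma diff_le_of_deriv_le {f : ℝ → ℝ} (hf : Differentiable ℝ f) {d : ℝ}
    (hd : ∀ v, deriv f v ≤ d) {a b : ℝ} (hab : a ≤ b) : f b - f a ≤ d * (b - a) := by
  have hmono : Monotone (fun v => d * v - f v) := by
    have hdiff : ∀ v : ℝ, HasDerivAt (fun v => d * v - f v) (d * 1 - deriv f v) v :=
      fun v => ((hasDerivAt_id v).const_mul d).sub (hf v).hasDerivAt
    apply monotone_of_deriv_nonneg (fun v => (hdiff v).differentiableAt)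
    intro v
    rw [(hdiff v).deriv]
    linarith [hd v]
  have := hmono hab
  simp only at this
  linarith

lemma diff_ge_of_le_deriv {f : ℝ → ℝ} (hf : Differentiable ℝ f) {c : ℝ}
    (hc : ∀ v, c ≤ deriv f v) {a b : ℝ} (hab : a ≤ b) : c * (b - a) ≤ f b - f a := by
  have hmono : Monotone (fun v => f v - c * v) := by
    have hdiff : ∀ v : ℝ, HasDerivAt (fun v => f v - c * v) (deriv f v - c * 1) v :=
      fun v => (hf v).hasDerivAt.sub ((hasDerivAt_id v).const_mul c)
    apply monotone_of_deriv_nonneg (fun v => (hdiff v).differentiableAt)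
    intro v
    rw [(hdiff v).deriv]
    linarith [hc v]
  have := hmono hab
  simp only at this
  linarith

lemma lip_aux {f : ℝ → ℝ} (hf : Differentiable ℝ f) {c d : ℝ}
    (hc : ∀ v, c ≤ deriv f v) (hd : ∀ v, deriv f v ≤ d) {a b : ℝ} (hab : a ≤ b) :
    |f b - f a| ≤ max |c| |d| * |b - a| := by
  have h1 := diff_le_of_deriv_le hf hd hab
  have h2 := diff_ge_of_le_deriv hf hc hab
  have hba : (0:ℝ) ≤ b - a := sub_nonneg.2 hab
  rw [abs_of_nonneg hba, abs_le]
  constructor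
  · have hcK : -(max |c| |d|) ≤ c := le_trans (neg_le_neg (le_max_left |c| |d|)) (neg_abs_le c)
    nlinarith [mul_le_mul_of_nonneg_right hcK hba]
  · have hdK : d ≤ max |c| |d| := le_trans (le_abs_self d) (le_max_right _ _)
    nlinarith [mul_le_mul_of_nonneg_right hdK hba]

lemma lip_of_deriv_bounds {f : ℝ → ℝ} (hf : Differentiable ℝ f) {c d : ℝ}
    (hc : ∀ v, c ≤ deriv f v) (hd : ∀ v, deriv f v ≤ d) (a b : ℝ) :
    |f b - f a| ≤ max |c| |d| * |b - a| := by
  rcases le_total a b with h | h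
  · exact lip_aux hf hc hd h
  · rw [abs_sub_comm, abs_sub_comm b a]
    exact lip_aux hf hc hd h

lemma intOn_of_bdd {f : ℝ → ℝ} (ρ : Measure ℝ) (hρ : ρ (Set.Iic 0) ≠ ⊤)
    (hc : ContinuousOn f (Set.Iic 0)) {C : ℝ} (hC : ∀ s ∈ Set.Iic (0:ℝ), |f s| ≤ C) :
    MeasureTheory.IntegrableOn f (Set.Iic 0) ρ := by
  refine ⟨hc.aestronglyMeasurable measurableSet_Iic,
    HasFiniteIntegral.restrict_of_bounded (C := C) (lt_top_iff_ne_top.2 hρ) ?_⟩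
  refine (ae_restrict_iff' measurableSet_Iic).2 (ae_of_all _ fun s hs => ?_)
  simpa [Real.norm_eq_abs] using hC s hs

lemma IsBU_contOn {m : ℕ} {z : ℝ → Fin m → ℝ} (hz : IsBU m z) :
    ContinuousOn z (Set.Iic 0) := by
  intro s hs
  rw [Metric.continuousWithinAt_iff]
  intro ε hε
  obtain ⟨δ, hδ, H⟩ := hz.2 ε hε
  refine ⟨δ, hδ, fun {s'} hs' hd => ?_⟩
  rw [dist_eq_norm]
  exact H s' hs' s hs (by rwa [Real.dist_eq] at hd)

lemma contOn_shift {m : ℕ} {z : ℝ → Fin m → ℝ} (hz : IsBU m z) {s : ℝ} (hs : s ≤ 0)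
    (k : Fin m) : ContinuousOn (fun τ : ℝ => z (s + τ) k) (Set.Iic 0) := by
  have h2 : ContinuousOn (fun τ : ℝ => z (s + τ)) (Set.Iic 0) :=
    (IsBU_contOn hz).comp (continuous_const.add continuous_id).continuousOn
      (fun τ hτ => by
        simp only [Set.mem_Iic] at *
        exact add_nonpos hs hτ)
  exact (continuous_apply k).comp_continuousOn h2

lemma intOn_shift {m : ℕ} {z : ℝ → Fin m → ℝ} (hz : IsBU m z) {C : ℝ}
    (hC : ∀ s : ℝ, s ≤ 0 → ‖z s‖ ≤ C) (ρ : Measure ℝ) (hρ : ρ (Set.Iic 0) ≠ ⊤)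
    {s : ℝ} (hs : s ≤ 0) (k : Fin m) :
    MeasureTheory.IntegrableOn (fun τ => z (s + τ) k) (Set.Iic 0) ρ := by
  refine intOn_of_bdd ρ hρ (contOn_shift hz hs k) (C := C) (fun τ hτ => ?_)
  simp only [Set.mem_Iic] at hτ
  calc |z (s + τ) k| ≤ ‖z (s + τ)‖ := by
        simpa [Real.norm_eq_abs] using norm_le_pi_norm (z (s + τ)) k
    _ ≤ C := hC _ (add_nonpos hs hτ)

theorem statement14 (m : ℕ) (μ ν : Fin m → Fin m → Measure ℝ)
    (g : Fin (m+1) → Fin m → ℝ → ℝ → ℝ) (It : Fin m → ℝ → ℝ)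
    (cc dd : Fin (m+1) → Fin m → ℝ)
    (hC1 : C1cond m g It) (hC3 : C3cond m μ) (hC4 : C4cond m ν)
    (hcd : CDcond m g cc dd) (hC5 : C5cond m μ ν cc dd)
    (t : ℝ) (x y : ℝ → Fin m → ℝ) (hx : IsBU m x) (hy : IsBU m y)
    (hxy : leD m ν (fun _ _ => 0) x y) (i : Fin m) :
    Fcomp m μ g It t y i - Fcomp m μ g It t x i ≥
      -(∑ j : Fin (m+1), dd j i) *
        (Dop m ν (fun _ _ => 0) y i - Dop m ν (fun _ _ => 0) x i) +
      ∑ j : Fin m,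
        (cc i.succ j * (∫ s in Set.Iic (0:ℝ), (y s j - x s j) ∂(μ i j))
          - (∑ k : Fin (m+1), dd k i) *
            ∫ s in Set.Iic (0:ℝ), (y s j - x s j) ∂(ν i j)) := by
  obtain ⟨hg1, hgbd, hgu, hdb, hdu, hmono, hg0, hI0, hIb, hIu⟩ := hC1
  obtain ⟨hμ1, hμ2, hμ3⟩ := hC3
  obtain ⟨hν1, hν2, hν3, hν4⟩ := hC4
  rcases Nat.eq_zero_or_pos m with hm | hm
  · subst hm; exact i.elim0
  haveI : Nonempty (Fin m) := ⟨⟨0, hm⟩⟩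
  haveI : Nonempty (Set.Iic (0:ℝ)) := ⟨⟨0, Set.mem_Iic.2 le_rfl⟩⟩
  obtain ⟨Cx, hCx⟩ := hx.1
  obtain ⟨Cy, hCy⟩ := hy.1
  have hνfin : ∀ j k : Fin m, ν j k (Set.Iic 0) ≠ ⊤ :=
    fun j k => ne_top_of_le_ne_top (hν1 j k) (measure_mono (Set.subset_univ _))
  have hμfin : ∀ k : Fin m, μ i k (Set.Iic 0) ≠ ⊤ := fun k => by
    rw [hμ1 i k]; exact ENNReal.one_ne_top
  -- integrability of shifted components
  have hxint : ∀ (ρ : Measure ℝ), ρ (Set.Iic 0) ≠ ⊤ → ∀ {s : ℝ}, s ≤ 0 → ∀ k,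
      MeasureTheory.IntegrableOn (fun τ => x (s + τ) k) (Set.Iic 0) ρ :=
    fun ρ hρ {s} hs k => intOn_shift hx hCx ρ hρ hs k
  have hyint : ∀ (ρ : Measure ℝ), ρ (Set.Iic 0) ≠ ⊤ → ∀ {s : ℝ}, s ≤ 0 → ∀ k,
      MeasureTheory.IntegrableOn (fun τ => y (s + τ) k) (Set.Iic 0) ρ :=
    fun ρ hρ {s} hs k => intOn_shift hy hCy ρ hρ hs k
  have hxint0 : ∀ (ρ : Measure ℝ), ρ (Set.Iic 0) ≠ ⊤ → ∀ k,
      MeasureTheory.IntegrableOn (fun τ => x τ k) (Set.Iic 0) ρ := by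
    intro ρ hρ k
    have := hxint ρ hρ le_rfl k
    simpa using this
  have hyint0 : ∀ (ρ : Measure ℝ), ρ (Set.Iic 0) ≠ ⊤ → ∀ k,
      MeasureTheory.IntegrableOn (fun τ => y τ k) (Set.Iic 0) ρ := by
    intro ρ hρ k
    have := hyint ρ hρ le_rfl k
    simpa using this
  -- the key consequence of x ≤_D y
  have hkey : ∀ s ≤ (0:ℝ), ∀ j : Fin m,
      (∑ k : Fin m, ∫ τ in Set.Iic (0:ℝ), (y (s + τ) k - x (s + τ) k) ∂ν j k)
        ≤ y s j - x s j := by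
    intro s hs j
    have h0 := hxy s hs j
    simp only [Dhat, Dop, shift, Measure.restrict_zero,
      MeasureTheory.integral_zero_measure, sub_zero, add_zero] at h0
    have heq : ∀ k : Fin m, ∫ τ in Set.Iic (0:ℝ), (y (s + τ) k - x (s + τ) k) ∂ν j k
        = (∫ τ in Set.Iic (0:ℝ), y (s + τ) k ∂ν j k)
          - ∫ τ in Set.Iic (0:ℝ), x (s + τ) k ∂ν j k :=
      fun k => MeasureTheory.integral_sub (hyint _ (hνfin j k) hs k)
        (hxint _ (hνfin j k) hs k)
    rw [Finset.sum_congr rfl (fun k _ => heq k), Finset.sum_sub_distrib]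
    linarith
  -- the infimum of y - x is nonnegative
  set β := ⨅ p : (Set.Iic (0:ℝ)) × Fin m, (y p.1 p.2 - x p.1 p.2) with hβdef
  have hbdd : BddBelow (Set.range fun p : (Set.Iic (0:ℝ)) × Fin m =>
      y p.1 p.2 - x p.1 p.2) := by
    refine ⟨-(Cy + Cx), ?_⟩
    rintro r ⟨⟨⟨s, hs⟩, k⟩, rfl⟩
    have h1 : |y s k| ≤ Cy := le_trans
      (by simpa [Real.norm_eq_abs] using norm_le_pi_norm (y s) k) (hCy s hs)
    have h2 : |x s k| ≤ Cx := le_trans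
      (by simpa [Real.norm_eq_abs] using norm_le_pi_norm (x s) k) (hCx s hs)
    have := abs_le.1 h1
    have := abs_le.1 h2
    simp only
    linarith [this.1, this.2]
  have hβle : ∀ s ≤ (0:ℝ), ∀ k : Fin m, β ≤ y s k - x s k :=
    fun s hs k => ciInf_le hbdd (⟨⟨s, Set.mem_Iic.2 hs⟩, k⟩)
  have hlow : ∀ s ≤ (0:ℝ), ∀ j : Fin m,
      β * (∑ k : Fin m, (ν j k (Set.Iic 0)).toReal) ≤ y s j - x s j := by
    intro s hs j
    refine le_trans ?_ (hkey s hs j)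
    rw [Finset.mul_sum]
    refine Finset.sum_le_sum fun k _ => ?_
    have hconst : ∫ _ in Set.Iic (0:ℝ), β ∂ν j k = (ν j k (Set.Iic 0)).toReal * β := by
      rw [setIntegral_const, smul_eq_mul, measureReal_def]
    rw [mul_comm, ← hconst]
    refine setIntegral_mono_on
      (MeasureTheory.integrableOn_const (hνfin j k))
      ((hyint _ (hνfin j k) hs k).sub (hxint _ (hνfin j k) hs k))
      measurableSet_Iic (fun τ hτ => hβle _ (add_nonpos hs (Set.mem_Iic.1 hτ)) k)
  have hβ0 : 0 ≤ β := by
    by_contra hneg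
    push_neg at hneg
    set r := Finset.univ.sup' Finset.univ_nonempty
      (fun j : Fin m => ∑ k : Fin m, (ν j k (Set.Iic 0)).toReal) with hrdef
    have hr1 : r < 1 := (Finset.sup'_lt_iff _).2 fun j _ => hν4 j
    have hle : β * r ≤ β := by
      refine le_of_forall_pos_le_add ?_
      intro ε hε
      obtain ⟨p, hp⟩ := exists_lt_of_ciInf_lt (show β < β + ε by linarith)
      have h1 := hlow p.1 (Set.mem_Iic.1 p.1.2) p.2
      have h2' : (∑ k : Fin m, (ν p.2 k (Set.Iic 0)).toReal) ≤ r := by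
        rw [hrdef]
        exact Finset.le_sup' (fun j : Fin m => ∑ k : Fin m, (ν j k (Set.Iic 0)).toReal)
          (Finset.mem_univ p.2)
      have h2 : β * r ≤ β * (∑ k : Fin m, (ν p.2 k (Set.Iic 0)).toReal) :=
        mul_le_mul_of_nonpos_left h2' (le_of_lt hneg)
      linarith
    have := mul_lt_mul_of_neg_left hr1 hneg
    linarith
  have hw : ∀ s ≤ (0:ℝ), ∀ k : Fin m, x s k ≤ y s k := by
    intro s hs k
    have := hβle s hs k
    linarith
  -- derivative bounds
  have hdub : ∀ (k : Fin (m+1)) (τ v : ℝ), deriv (g k i τ) v ≤ dd k i :=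
    fun k τ v => (hcd.2 k i).1 ⟨τ, v, rfl⟩
  have hdubj : ∀ (j : Fin m) (τ v : ℝ), deriv (g i.succ j τ) v ≤ dd i.succ j :=
    fun j τ v => (hcd.2 i.succ j).1 ⟨τ, v, rfl⟩
  have hclb : ∀ (j : Fin m) (τ v : ℝ), cc i.succ j ≤ deriv (g i.succ j τ) v :=
    fun j τ v => (hcd.1 i.succ j).1 ⟨τ, v, rfl⟩
  have hclbk : ∀ (k : Fin (m+1)) (τ v : ℝ), cc k i ≤ deriv (g k i τ) v :=
    fun k τ v => (hcd.1 k i).1 ⟨τ, v, rfl⟩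
  have hup : ∀ (k : Fin (m+1)) (τ : ℝ) {a b : ℝ}, a ≤ b →
      g k i τ b - g k i τ a ≤ dd k i * (b - a) :=
    fun k τ a b hab => diff_le_of_deriv_le ((hg1 k i τ).differentiable one_ne_zero)
      (hdub k τ) hab
  have hlo : ∀ (j : Fin m) (τ : ℝ) {a b : ℝ}, a ≤ b →
      cc i.succ j * (b - a) ≤ g i.succ j τ b - g i.succ j τ a :=
    fun j τ a b hab => diff_ge_of_le_deriv ((hg1 i.succ j τ).differentiable one_ne_zero)
      (hclb j τ) hab
  -- Lipschitz constants
  set Kf : Fin m → ℝ := fun j => max |cc i.succ j| |dd i.succ j| with hKf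
  have hK0 : ∀ j, 0 ≤ Kf j := fun j => le_trans (abs_nonneg _) (le_max_left _ _)
  have hlip : ∀ (j : Fin m) (τ a b : ℝ),
      |g i.succ j τ b - g i.succ j τ a| ≤ Kf j * |b - a| :=
    fun j τ a b => lip_of_deriv_bounds ((hg1 i.succ j τ).differentiable one_ne_zero)
      (hclb j τ) (hdubj j τ) a b
  -- continuity of the composed integrands
  have hJc : ∀ (j : Fin m) (z : ℝ → Fin m → ℝ), IsBU m z →
      ContinuousOn (fun s => g i.succ j (t + s) (z s j)) (Set.Iic 0) := by
    intro j z hz s0 hs0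
    rw [Metric.continuousWithinAt_iff]
    intro ε hε
    obtain ⟨δ1, hδ1, H1⟩ := hgu i.succ j (z s0 j) (ε/2) (by linarith)
    obtain ⟨δ2, hδ2, H2⟩ := hz.2 (ε/(2*(Kf j + 1))) (by positivity)
    refine ⟨min δ1 δ2, lt_min hδ1 hδ2, fun {s} hs hd => ?_⟩
    rw [Real.dist_eq] at hd
    have hzd : |z s j - z s0 j| ≤ ‖z s - z s0‖ := by
      simpa [Real.norm_eq_abs] using norm_le_pi_norm (z s - z s0) j
    have h3 : ‖z s - z s0‖ < ε/(2*(Kf j + 1)) :=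
      H2 s (Set.mem_Iic.1 hs) s0 (Set.mem_Iic.1 hs0) (lt_of_lt_of_le hd (min_le_right _ _))
    have h1 : |g i.succ j (t + s) (z s j) - g i.succ j (t + s) (z s0 j)|
        ≤ Kf j * |z s j - z s0 j| := hlip j (t + s) _ _
    have h2 : |g i.succ j (t + s) (z s0 j) - g i.succ j (t + s0) (z s0 j)| < ε/2 := by
      refine H1 (t + s) (t + s0) ?_
      have he : (t + s) - (t + s0) = s - s0 := by ring
      rw [he]
      exact lt_of_lt_of_le hd (min_le_left _ _)
    have htri : |g i.succ j (t + s) (z s j) - g i.succ j (t + s0) (z s0 j)|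
        ≤ |g i.succ j (t + s) (z s j) - g i.succ j (t + s) (z s0 j)|
          + |g i.succ j (t + s) (z s0 j) - g i.succ j (t + s0) (z s0 j)| :=
      abs_sub_le _ _ _
    have hKb : Kf j * |z s j - z s0 j| ≤ Kf j * (ε/(2*(Kf j + 1))) :=
      mul_le_mul_of_nonneg_left (le_of_lt (lt_of_le_of_lt hzd h3)) (hK0 j)
    have hfrac : Kf j * (ε/(2*(Kf j + 1))) < ε/2 := by
      have hx1 : Kf j * (ε/(2*(Kf j + 1))) = ε * Kf j / (2*(Kf j + 1)) := by ring
      have hpos : (0:ℝ) < 2*(Kf j + 1) := by positivity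
      rw [hx1, div_lt_div_iff₀ hpos two_pos]
      nlinarith [hK0 j, hε]
    rw [Real.dist_eq]
    calc |g i.succ j (t + s) (z s j) - g i.succ j (t + s0) (z s0 j)|
        ≤ _ + _ := htri
      _ < ε := by linarith
  -- integrability of the composed integrands
  have hJint : ∀ (j : Fin m) (z : ℝ → Fin m → ℝ) (hz : IsBU m z) (C : ℝ),
      (∀ s : ℝ, s ≤ 0 → ‖z s‖ ≤ C) →
      MeasureTheory.IntegrableOn (fun s => g i.succ j (t + s) (z s j))
        (Set.Iic 0) (μ i j) := by
    intro j z hz C hC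
    refine intOn_of_bdd _ (hμfin j) (hJc j z hz) (C := Kf j * C) (fun s hs => ?_)
    have h1 : |g i.succ j (t + s) (z s j) - g i.succ j (t + s) 0|
        ≤ Kf j * |z s j - 0| := hlip j (t + s) 0 (z s j)
    rw [hg0 i.succ j (t + s), sub_zero, sub_zero] at h1
    refine le_trans h1 (mul_le_mul_of_nonneg_left ?_ (hK0 j))
    refine le_trans ?_ (hC s (Set.mem_Iic.1 hs))
    simpa [Real.norm_eq_abs] using norm_le_pi_norm (z s) j
  -- integral subtraction identities
  have hμsub : ∀ j : Fin m, ∫ s in Set.Iic (0:ℝ), (y s j - x s j) ∂μ i j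
      = (∫ s in Set.Iic (0:ℝ), y s j ∂μ i j) - ∫ s in Set.Iic (0:ℝ), x s j ∂μ i j :=
    fun j => MeasureTheory.integral_sub (hyint0 _ (hμfin j) j) (hxint0 _ (hμfin j) j)
  have hνsub : ∀ j : Fin m, ∫ s in Set.Iic (0:ℝ), (y s j - x s j) ∂ν i j
      = (∫ s in Set.Iic (0:ℝ), y s j ∂ν i j) - ∫ s in Set.Iic (0:ℝ), x s j ∂ν i j :=
    fun j => MeasureTheory.integral_sub (hyint0 _ (hνfin i j) j) (hxint0 _ (hνfin i j) j)
  rw [ge_iff_le]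
  -- rewrite the right-hand side
  have hgoalR : -(∑ j : Fin (m+1), dd j i) *
        (Dop m ν (fun _ _ => 0) y i - Dop m ν (fun _ _ => 0) x i) +
      ∑ j : Fin m,
        (cc i.succ j * (∫ s in Set.Iic (0:ℝ), (y s j - x s j) ∂(μ i j))
          - (∑ k : Fin (m+1), dd k i) *
            ∫ s in Set.Iic (0:ℝ), (y s j - x s j) ∂(ν i j))
      = -(∑ k : Fin (m+1), dd k i) * (y 0 i - x 0 i)
        + ∑ j : Fin m, cc i.succ j * ((∫ s in Set.Iic (0:ℝ), y s j ∂μ i j)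
            - ∫ s in Set.Iic (0:ℝ), x s j ∂μ i j) := by
    simp only [Dop, Measure.restrict_zero, MeasureTheory.integral_zero_measure, sub_zero]
    simp only [hμsub, hνsub]
    simp only [Finset.sum_sub_distrib, Finset.mul_sum, mul_sub, neg_mul, Finset.sum_neg_distrib]
    ring
  rw [hgoalR]
  have hF : Fcomp m μ g It t y i - Fcomp m μ g It t x i
      = -(g 0 i t (y 0 i) - g 0 i t (x 0 i))
        - (∑ j : Fin m, (g j.succ i t (y 0 i) - g j.succ i t (x 0 i)))
        + ∑ j : Fin m, ((∫ s in Set.Iic (0:ℝ), g i.succ j (t + s) (y s j) ∂μ i j)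
            - ∫ s in Set.Iic (0:ℝ), g i.succ j (t + s) (x s j) ∂μ i j) := by
    simp only [Fcomp]
    rw [Finset.sum_sub_distrib, Finset.sum_sub_distrib]
    ring
  rw [hF]
  have hA0 : x 0 i ≤ y 0 i := hw 0 le_rfl i
  have hG0 : g 0 i t (y 0 i) - g 0 i t (x 0 i) ≤ dd 0 i * (y 0 i - x 0 i) := hup 0 t hA0
  have hs1 : (∑ j : Fin m, (g j.succ i t (y 0 i) - g j.succ i t (x 0 i)))
      ≤ ∑ j : Fin m, dd j.succ i * (y 0 i - x 0 i) :=
    Finset.sum_le_sum fun j _ => hup j.succ t hA0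
  have hs2 : (∑ j : Fin m, cc i.succ j * ((∫ s in Set.Iic (0:ℝ), y s j ∂μ i j)
        - ∫ s in Set.Iic (0:ℝ), x s j ∂μ i j))
      ≤ ∑ j : Fin m, ((∫ s in Set.Iic (0:ℝ), g i.succ j (t + s) (y s j) ∂μ i j)
        - ∫ s in Set.Iic (0:ℝ), g i.succ j (t + s) (x s j) ∂μ i j) := by
    refine Finset.sum_le_sum fun j _ => ?_
    rw [← hμsub j, ← MeasureTheory.integral_sub (hJint j y hy Cy hCy)
      (hJint j x hx Cx hCx), ← MeasureTheory.integral_const_mul]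
    refine setIntegral_mono_on
      (((hyint0 _ (hμfin j) j).sub (hxint0 _ (hμfin j) j)).const_mul _)
      ((hJint j y hy Cy hCy).sub (hJint j x hx Cx hCx))
      measurableSet_Iic (fun s hs => ?_)
    exact hlo j (t + s) (hw s (Set.mem_Iic.1 hs) j)
  have hSexp : (∑ k : Fin (m+1), dd k i) * (y 0 i - x 0 i)
      = dd 0 i * (y 0 i - x 0 i) + ∑ j : Fin m, dd j.succ i * (y 0 i - x 0 i) := by
    rw [Finset.sum_mul, Fin.sum_univ_succ]
  linarith
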